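/- Let α be a positive integer, 0 < p = 1 - q < 1, z > 1, and let 1 ≤ k ≤ α with k ≥ z. Then h₂(k) = ∑_{j=k}^{α} [(α-k)!/(α-j)!]·[(k-1)!/j!]·(p/q)^{j-k}·E[(B_{α,p}-z)^+] satisfies h₂(k) ≤ 1 + (q^{k-α} - 1)/(qz). -/

import Mathlib

open Finset

/-- `E[(B_{α,p} - z)^+]`, the expected call function of a binomial random variable
`B_{α,p}` with `P(B = j) = C(α,j) p^j (1-p)^{α-j}` for `j = 0,…,α`. -/
noncomputable def binomCallExp (α : ℕ) (p z : ℝ) : ℝ :=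
  ∑ j ∈ Finset.range (α + 1),
    (α.choose j : ℝ) * p ^ j * (1 - p) ^ (α - j) * max ((j : ℝ) - z) 0

/-- `h₁(k) = ∑_{j=k}^{α} [(α-k)!/(α-j)!]·[(k-1)!/j!]·(p/q)^{j-k}·(j-z)^+` with `q = 1 - p`. -/
noncomputable def h1 (α : ℕ) (p z : ℝ) (k : ℕ) : ℝ :=
  ∑ j ∈ Finset.Icc k α,
    ((α - k).factorial : ℝ) / ((α - j).factorial : ℝ) *
      (((k - 1).factorial : ℝ) / (j.factorial : ℝ)) *
        (p / (1 - p)) ^ (j - k) * max ((j : ℝ) - z) 0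

/-- `h₂(k) = ∑_{j=k}^{α} [(α-k)!/(α-j)!]·[(k-1)!/j!]·(p/q)^{j-k}·E[(B_{α,p}-z)^+]`
with `q = 1 - p`. -/
noncomputable def h2 (α : ℕ) (p z : ℝ) (k : ℕ) : ℝ :=
  ∑ j ∈ Finset.Icc k α,
    ((α - k).factorial : ℝ) / ((α - j).factorial : ℝ) *
      (((k - 1).factorial : ℝ) / (j.factorial : ℝ)) *
        (p / (1 - p)) ^ (j - k) * binomCallExp α p z

/-- The solution `g_z` of the binomial Stein equation: `g_z(0) = 0`,
`g_z(k) = -∑_{j=k}^{α} [(α-k)!/(α-j)!]·[(k-1)!/j!]·(p/q)^{j-k}·[(j-z)^+ - E(B_{α,p}-z)^+]`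
for `1 ≤ k ≤ α`, extended by `g_z(k) = 0` for `k > α` (in particular `g_z(α+1) = 0`). -/
noncomputable def steinSol (α : ℕ) (p z : ℝ) (k : ℕ) : ℝ :=
  if k = 0 ∨ α < k then 0
  else
    -∑ j ∈ Finset.Icc k α,
      ((α - k).factorial : ℝ) / ((α - j).factorial : ℝ) *
        (((k - 1).factorial : ℝ) / (j.factorial : ℝ)) *
          (p / (1 - p)) ^ (j - k) * (max ((j : ℝ) - z) 0 - binomCallExp α p z)

lemma aux_le_choose : ∀ j : ℕ, 1 ≤ j → ∀ k : ℕ, 1 ≤ k → k + j ≤ (k + j).choose k := by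
  intro j
  induction j with
  | zero => omega
  | succ j ih =>
    intro _ k hk
    rcases Nat.eq_zero_or_pos j with hj0 | hj1
    · subst hj0; rw [Nat.choose_succ_self_right]
    · obtain ⟨k', rfl⟩ : ∃ k', k = k' + 1 := ⟨k - 1, by omega⟩
      have h1 := ih hj1 (k' + 1) hk
      have h2 : 0 < (k' + 1 + j).choose k' := Nat.choose_pos (by omega)
      have h3 : (k' + 1 + (j + 1)).choose (k' + 1)
          = (k' + 1 + j).choose k' + (k' + 1 + j).choose (k' + 1) := by
        rw [show k' + 1 + (j + 1) = (k' + 1 + j) + 1 from rfl]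
        exact Nat.choose_succ_succ' _ _
      omega

lemma aux_trinom (α k j : ℕ) (h : k + j ≤ α) :
    α.choose (k + j) * (k + j).choose k = α.choose k * (α - k).choose j := by
  have := Nat.choose_mul (n := α) (Nat.le_add_right k j)
  simpa [Nat.add_sub_cancel_left] using this


set_option maxHeartbeats 1000000 in
/-- For `z > 1` and `1 ≤ k ≤ α` with `k ≥ z`,
`h₂(k) ≤ 1 + (q^{k-α} - 1)/(qz)`. -/
theorem h2_le_of_ge (α : ℕ) (hα : 0 < α) (p q : ℝ)
    (hq : q = 1 - p) (hp : 0 < p) (hp1 : p < 1) (z : ℝ) (hz : 1 < z)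
    (k : ℕ) (hk : 1 ≤ k) (hkα : k ≤ α) (hzk : z ≤ (k : ℝ)) :
    h2 α p z k ≤ 1 + (q ^ ((k : ℤ) - (α : ℤ)) - 1) / (q * z) := by
  have hq0 : 0 < q := by rw [hq]; linarith
  have hq1 : q < 1 := by rw [hq]; linarith
  have hz0 : (0:ℝ) < z := by linarith
  have hk0 : (0:ℝ) < (k:ℝ) := by exact_mod_cast hk
  set n := α - k with hn
  set m : ℕ → ℝ := fun i => (α.choose i : ℝ) * p ^ i * q ^ (α - i) with hm
  have hm0 : ∀ i, 0 ≤ m i := fun i => by rw [hm]; positivity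
  have hmk : 0 < m k := by
    have h1 : 0 < (α.choose k : ℝ) := by exact_mod_cast Nat.choose_pos hkα
    rw [hm]; positivity
  set E := binomCallExp α p z with hEs
  have hEdef : E = ∑ i ∈ range (α+1), m i * max ((i:ℝ) - z) 0 := by
    rw [hEs]; unfold binomCallExp
    refine Finset.sum_congr rfl fun i _ => ?_
    rw [hm]; simp only [← hq]
  -- total mass 1
  have htot : ∑ i ∈ range (α+1), m i = 1 := by
    have h1 := add_pow p q α
    rw [show p + q = 1 by rw [hq]; ring, one_pow] at h1
    rw [hm, h1]
    exact Finset.sum_congr rfl fun i _ => by ring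
  set P := ∑ i ∈ Icc k α, m i with hP
  set Q := ∑ i ∈ range k, m i with hQ
  have hsplit : Q + P = 1 := by
    rw [hP, hQ, ← Finset.Ico_add_one_right_eq_Icc, Finset.sum_range_add_sum_Ico _ (by omega), htot]
  have hP0 : 0 ≤ P := Finset.sum_nonneg fun i _ => hm0 i
  have hQ0 : 0 ≤ Q := Finset.sum_nonneg fun i _ => hm0 i
  set C := ∑ i ∈ Icc k α, ((i:ℝ) - z) * m i with hC
  -- E = A + C
  have hEAC : E = (∑ i ∈ range k, m i * max ((i:ℝ) - z) 0) + C := by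
    rw [hEdef, ← Finset.sum_range_add_sum_Ico _ (show k ≤ α + 1 by omega)]
    congr 1
    rw [Finset.Ico_add_one_right_eq_Icc, hC]
    refine Finset.sum_congr rfl fun i hi => ?_
    have hi' := (Finset.mem_Icc.mp hi).1
    have : z ≤ (i:ℝ) := le_trans hzk (by exact_mod_cast hi')
    rw [max_eq_left (by linarith)]; ring
  set A := ∑ i ∈ range k, m i * max ((i:ℝ) - z) 0 with hA
  have hAle : A ≤ ((k:ℝ) - z) * Q := by
    rw [hA, hQ, Finset.mul_sum]
    refine Finset.sum_le_sum fun i hi => ?_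
    have hik : (i:ℝ) ≤ (k:ℝ) := by
      have := Finset.mem_range.mp hi; exact_mod_cast this.le
    rw [mul_comm]
    exact mul_le_mul_of_nonneg_right (max_le (by linarith) (by linarith)) (hm0 i)
  have hCge : ((k:ℝ) - z) * P ≤ C := by
    rw [hC, hP, Finset.mul_sum]
    refine Finset.sum_le_sum fun i hi => ?_
    have hik : (k:ℝ) ≤ (i:ℝ) := by exact_mod_cast (Finset.mem_Icc.mp hi).1
    exact mul_le_mul_of_nonneg_right (by linarith) (hm0 i)
  -- Step 1 : E * P ≤ C
  have step1 : E * P ≤ C := by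
    have h1 : A * P ≤ ((k:ℝ) - z) * Q * P := mul_le_mul_of_nonneg_right hAle hP0
    have h2 : ((k:ℝ) - z) * P * Q ≤ C * Q := mul_le_mul_of_nonneg_right hCge hQ0
    have hC0 : 0 ≤ C := le_trans (by nlinarith) hCge
    nlinarith [hsplit]
  -- geometric sum
  have hgeom : ∑ j ∈ Icc 1 n, (n.choose j : ℝ) * (p/q)^j = (q^n)⁻¹ - 1 := by
    have h1 := add_pow (p/q) 1 n
    rw [Finset.range_eq_Ico, Finset.Ico_add_one_right_eq_Icc, Finset.Icc_eq_cons_Ioc (Nat.zero_le n),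
      Finset.sum_cons] at h1
    have h2 : p/q + 1 = 1/q := by field_simp; linarith
    rw [h2, one_div, inv_pow] at h1
    have h3 : ∑ j ∈ Icc 1 n, (n.choose j : ℝ) * (p/q)^j
        = ∑ j ∈ Ioc 0 n, (p/q)^j * 1^(n-j) * (n.choose j : ℝ) := by
      rw [← Finset.Icc_add_one_left_eq_Ioc]
      exact Finset.sum_congr rfl fun j _ => by ring
    have h4 : ((p/q)^0 * (1:ℝ)^(n-0) * (n.choose 0 : ℝ)) = 1 := by simp
    rw [h3]
    rw [h4] at h1
    linarith
  -- decompose C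
  have hCdec : C = ((k:ℝ) - z) * m k + ∑ i ∈ Icc (k+1) α, ((i:ℝ) - z) * m i := by
    rw [hC, Finset.Icc_eq_cons_Ioc hkα, Finset.sum_cons, ← Finset.Icc_add_one_left_eq_Ioc]
  have hreidx : ∑ i ∈ Icc (k+1) α, ((i:ℝ) - z) * m i
      = ∑ j ∈ Icc 1 n, (((k+j : ℕ):ℝ) - z) * m (k+j) := by
    have hmap : Icc (k+1) α = Finset.map (addLeftEmbedding k) (Icc 1 n) := by
      rw [Finset.map_add_left_Icc]
      congr 1
      omega
    rw [hmap, Finset.sum_map]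
    exact Finset.sum_congr rfl fun j _ => by simp [addLeftEmbedding_apply]
  -- termwise bound
  have hterm : ∀ j ∈ Icc 1 n, (((k+j:ℕ):ℝ) - z) * m (k+j)
      ≤ (k:ℝ) * m k / (q*z) * ((n.choose j : ℝ) * (p/q)^j) := by
    intro j hj
    obtain ⟨hj1, hjn⟩ := Finset.mem_Icc.mp hj
    have hkjα : k + j ≤ α := by omega
    have hch : ((α.choose k : ℝ)) * ((n.choose j : ℝ)) = (α.choose (k+j) : ℝ) * (((k+j).choose k : ℝ)) := by
      exact_mod_cast (aux_trinom α k j hkjα).symm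
    have hgec : ((k:ℝ) + (j:ℝ)) ≤ (((k+j).choose k : ℝ)) := by
      exact_mod_cast aux_le_choose j hj1 k hk
    have hj0 : (0:ℝ) ≤ (j:ℝ) := Nat.cast_nonneg j
    have hX0 : (0:ℝ) ≤ ((k:ℝ) + (j:ℝ)) - z := by linarith
    have hkey : z * q * (((k:ℝ) + (j:ℝ)) - z) ≤ (k:ℝ) * (((k+j).choose k : ℝ)) := by
      have t1 : z * (((k:ℝ) + (j:ℝ)) - z) ≤ (k:ℝ) * ((k:ℝ) + (j:ℝ)) :=
        mul_le_mul hzk (by linarith) hX0 hk0.le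
      have t2 : (k:ℝ) * ((k:ℝ) + (j:ℝ)) ≤ (k:ℝ) * (((k+j).choose k : ℝ)) :=
        mul_le_mul_of_nonneg_left hgec hk0.le
      have t0 : z * (((k:ℝ) + (j:ℝ)) - z) * q ≤ z * (((k:ℝ) + (j:ℝ)) - z) :=
        mul_le_of_le_one_right (mul_nonneg hz0.le hX0) hq1.le
      calc z * q * (((k:ℝ) + (j:ℝ)) - z) = z * (((k:ℝ) + (j:ℝ)) - z) * q := by ring
        _ ≤ z * (((k:ℝ) + (j:ℝ)) - z) := t0
        _ ≤ (k:ℝ) * ((k:ℝ) + (j:ℝ)) := t1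
        _ ≤ (k:ℝ) * (((k+j).choose k : ℝ)) := t2
    have hterm' : (((k:ℝ)+(j:ℝ)) - z) * m (k+j) * ((q*z) * q^j)
        ≤ (k:ℝ) * m k * ((n.choose j : ℝ) * p^j) := by
      simp only [hm]
      have e2 : q^(α-k) = q^(α-(k+j)) * q^j := by rw [← pow_add]; congr 1; omega
      calc (((k:ℝ)+(j:ℝ)) - z) * ((α.choose (k+j):ℝ) * p^(k+j) * q^(α-(k+j))) * ((q*z) * q^j)
          = (z * q * (((k:ℝ)+(j:ℝ)) - z)) * ((α.choose (k+j):ℝ) * p^(k+j) * (q^(α-(k+j)) * q^j)) := by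
            ring
        _ ≤ ((k:ℝ) * (((k+j).choose k : ℝ))) * ((α.choose (k+j):ℝ) * p^(k+j) * (q^(α-(k+j)) * q^j)) := by
            apply mul_le_mul_of_nonneg_right hkey (by positivity)
        _ = (k:ℝ) * ((α.choose k:ℝ) * p^k * q^(α-k)) * ((n.choose j : ℝ) * p^j) := by
            rw [e2, pow_add p k j]
            linear_combination (-(k:ℝ) * (p^k * p^j) * (q^(α-(k+j)) * q^j)) * hch
    have hrhseq : (k:ℝ) * m k / (q*z) * ((n.choose j : ℝ) * (p/q)^j)
        = (k:ℝ) * m k * ((n.choose j : ℝ) * p^j) / ((q*z) * q^j) := by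
      rw [div_pow]; ring
    rw [hrhseq, le_div_iff₀ (by positivity)]
    push_cast
    linarith [hterm']
  have step2tail : ∑ j ∈ Icc 1 n, (((k+j:ℕ):ℝ) - z) * m (k+j)
      ≤ (k:ℝ) * m k / (q*z) * ((q^n)⁻¹ - 1) := by
    calc ∑ j ∈ Icc 1 n, (((k+j:ℕ):ℝ) - z) * m (k+j)
        ≤ ∑ j ∈ Icc 1 n, (k:ℝ) * m k / (q*z) * ((n.choose j : ℝ) * (p/q)^j) :=
          Finset.sum_le_sum hterm
      _ = (k:ℝ) * m k / (q*z) * ∑ j ∈ Icc 1 n, (n.choose j : ℝ) * (p/q)^j := by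
          rw [Finset.mul_sum]
      _ = _ := by rw [hgeom]
  have step2 : C ≤ (k:ℝ) * m k * (1 + ((q^n)⁻¹ - 1) / (q*z)) := by
    rw [hCdec, hreidx]
    have h1 : ((k:ℝ) - z) * m k ≤ (k:ℝ) * m k := by nlinarith [hmk]
    have h2 : (k:ℝ) * m k / (q*z) * ((q^n)⁻¹ - 1) = (k:ℝ) * m k * (((q^n)⁻¹ - 1)/(q*z)) := by
      ring
    have h3 : (k:ℝ) * m k * (1 + ((q^n)⁻¹ - 1)/(q*z))
        = (k:ℝ) * m k + (k:ℝ) * m k * (((q^n)⁻¹ - 1)/(q*z)) := by ring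
    rw [h3]
    rw [h2] at step2tail
    linarith [step2tail]
  -- h2 as product
  have hh2 : h2 α p z k = E * P / ((k:ℝ) * m k) := by
    unfold h2
    rw [← hEs]
    simp only [← hq]
    rw [hP, Finset.mul_sum, Finset.sum_div]
    refine Finset.sum_congr rfl fun j hj => ?_
    obtain ⟨hkj, hjα⟩ := Finset.mem_Icc.mp hj
    have a1 := Nat.choose_mul_factorial_mul_factorial hjα
    have a2 := Nat.choose_mul_factorial_mul_factorial hkα
    have a3 : k * (k-1).factorial = k.factorial := Nat.mul_factorial_pred (by omega)
    have hnatid : (α-k).factorial * ((k-1).factorial * (k * α.choose k))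
        = α.choose j * ((α-j).factorial * j.factorial) := by
      calc (α-k).factorial * ((k-1).factorial * (k * α.choose k))
          = α.choose k * (k * (k-1).factorial) * (α-k).factorial := by ring
        _ = α.choose k * k.factorial * (α-k).factorial := by rw [a3]
        _ = α.factorial := a2
        _ = α.choose j * j.factorial * (α-j).factorial := a1.symm
        _ = α.choose j * ((α-j).factorial * j.factorial) := by ring
    have hnatidR : ((α-k).factorial : ℝ) * (((k-1).factorial : ℝ) * ((k:ℝ) * (α.choose k : ℝ)))
        = (α.choose j : ℝ) * (((α-j).factorial : ℝ) * (j.factorial : ℝ)) := by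
      exact_mod_cast hnatid
    have e1 : p^k * p^(j-k) = p^j := by rw [← pow_add]; congr 1; omega
    have e2 : q^(α-j) * q^(j-k) = q^(α-k) := by rw [← pow_add]; congr 1; omega
    have hf1 : (0:ℝ) < ((α-j).factorial : ℝ) := by exact_mod_cast Nat.factorial_pos _
    have hf2 : (0:ℝ) < ((j).factorial : ℝ) := by exact_mod_cast Nat.factorial_pos _
    have hcf : ((α - k).factorial : ℝ) / ((α - j).factorial : ℝ) *
          (((k - 1).factorial : ℝ) / (j.factorial : ℝ)) * (p/q)^(j-k)
        = m j / ((k:ℝ) * m k) := by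
      simp only [hm]
      rw [div_pow, div_mul_div_comm, div_mul_div_comm,
        div_eq_div_iff (by positivity) (by positivity)]
      rw [← e1, ← e2]
      linear_combination (p^k * p^(j-k) * q^(α-j) * q^(j-k)) * hnatidR
    rw [hcf]
    ring
  rw [hh2]
  have hq2 : q ^ ((k:ℤ) - (α:ℤ)) = (q^n)⁻¹ := by
    have hcast : (k:ℤ) - (α:ℤ) = -(n:ℤ) := by omega
    rw [hcast, zpow_neg, zpow_natCast]
  rw [hq2, div_le_iff₀ (by positivity)]
  calc E * P ≤ C := step1
    _ ≤ (k:ℝ) * m k * (1 + ((q^n)⁻¹-1)/(q*z)) := step2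
    _ = (1 + ((q^n)⁻¹-1)/(q*z)) * ((k:ℝ) * m k) := by ring
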